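/- arXiv:2309.03653 — 2 statements merged into one kernel-verified Lean document; each statement's English description precedes it below -/
import Mathlib

section
/- (Theorem 1: essentially exponential convergence of estimated von Neumann entropy.) Let d ≥ 1, and let ρ : [0,∞) → M_d(ℂ) and ρ̂ : [0,∞) → M_d(ℂ) be functions such that ρ(t) and ρ̂(t) are d×d density matrices for every t ≥ 0. Suppose there exist constants M > 0 and σ > 0 such that ‖ρ̂(t) - ρ(t)‖ ≤ M·e^{-σt} in the Frobenius norm for all t ≥ 0. Then there exist a finite time T > 0 and a constant K > 0 such that |S(ρ(t)) - S(ρ̂(t))| ≤ K·e^{-σ(1 - 1/e)t} for all t ≥ T. -/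
open Matrix
open scoped ComplexOrder

/-- The Frobenius (Hilbert–Schmidt) norm of a complex matrix. -/
noncomputable def frobNorm {d : ℕ} (M : Matrix (Fin d) (Fin d) ℂ) : ℝ :=
  Real.sqrt ((Mᴴ * M).trace.re)

/-- The von Neumann entropy of a Hermitian matrix: `S(ρ) = ∑ₖ -λₖ ln λₖ` where the `λₖ`
are the real eigenvalues (counted with multiplicity), with the convention `0 ln 0 = 0`.
For non-Hermitian matrices the value is defined to be `0`. -/
noncomputable def vnEntropy {d : ℕ} (ρ : Matrix (Fin d) (Fin d) ℂ) : ℝ :=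
  if h : ρ.IsHermitian then ∑ k, Real.negMulLog (h.eigenvalues k) else 0

section helpers
variable {d : ℕ}


lemma negMulLog_le_rpow {x : ℝ} (hx : 0 ≤ x) :
    Real.negMulLog x ≤ x ^ (1 - (Real.exp 1)⁻¹) := by
  rcases eq_or_lt_of_le hx with h | hxp
  · simp only [← h, Real.negMulLog_zero]
    have h1e : (1:ℝ) < Real.exp 1 := by
      have := Real.add_one_le_exp 1; linarith
    rw [Real.zero_rpow (by
      have : (Real.exp 1)⁻¹ < 1 := by
        rw [inv_lt_one_iff₀]; right; exact h1e
      intro hc; rw [sub_eq_zero] at hc; rw [← hc] at this; linarith)]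
  · have he : (0:ℝ) < Real.exp 1 := Real.exp_pos 1
    have hlog : ∀ u : ℝ, 0 < u → Real.log u ≤ u / Real.exp 1 := by
      intro u hu
      have := Real.log_le_sub_one_of_pos (show 0 < u / Real.exp 1 by positivity)
      rw [Real.log_div (ne_of_gt hu) (ne_of_gt he), Real.log_exp] at this
      linarith
    have h1 : -Real.log x = Real.exp 1 * Real.log (x⁻¹ ^ (Real.exp 1)⁻¹) := by
      rw [Real.log_rpow (by positivity), Real.log_inv]
      field_simp
    have h2 : Real.log (x⁻¹ ^ (Real.exp 1)⁻¹) ≤ x⁻¹ ^ (Real.exp 1)⁻¹ / Real.exp 1 :=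
      hlog _ (Real.rpow_pos_of_pos (by positivity) _)
    have h3 : -Real.log x ≤ x ^ (-(Real.exp 1)⁻¹) := by
      rw [h1, Real.rpow_neg hx, ← Real.inv_rpow hx]
      calc Real.exp 1 * Real.log (x⁻¹ ^ (Real.exp 1)⁻¹)
          ≤ Real.exp 1 * (x⁻¹ ^ (Real.exp 1)⁻¹ / Real.exp 1) :=
            mul_le_mul_of_nonneg_left h2 he.le
        _ = x⁻¹ ^ (Real.exp 1)⁻¹ := by field_simp
    calc Real.negMulLog x = x * (-Real.log x) := by rw [Real.negMulLog]; ring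
      _ ≤ x * x ^ (-(Real.exp 1)⁻¹) := mul_le_mul_of_nonneg_left h3 hx
      _ = x ^ (1 - (Real.exp 1)⁻¹) := by
          nth_rewrite 1 [← Real.rpow_one x]
          rw [← Real.rpow_add hxp]
          ring_nf

lemma negMulLog_sub_le {x y : ℝ} (hx0 : 0 ≤ x) (hx1 : x ≤ 1) (hy0 : 0 ≤ y) (hy1 : y ≤ 1) :
    Real.negMulLog y - Real.negMulLog x ≤ Real.negMulLog |y - x| + |y - x| := by
  rcases le_total x y with h | h
  · -- subadditivity: η y ≤ η x + η (y - x)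
    have habs : |y - x| = y - x := abs_of_nonneg (by linarith)
    rw [habs]
    have key : Real.negMulLog y ≤ Real.negMulLog x + Real.negMulLog (y - x) := by
      simp only [Real.negMulLog]
      have t1 : 0 ≤ x * (Real.log y - Real.log x) := by
        rcases eq_or_lt_of_le hx0 with h0 | h0
        · simp [← h0]
        · exact mul_nonneg h0.le (sub_nonneg.mpr (Real.log_le_log h0 h))
      have t2 : 0 ≤ (y - x) * (Real.log y - Real.log (y - x)) := by
        rcases eq_or_lt_of_le (show (0:ℝ) ≤ y - x by linarith) with h0 | h0
        · simp [← h0]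
        · exact mul_nonneg h0.le (sub_nonneg.mpr (Real.log_le_log h0 (by linarith)))
      nlinarith [t1, t2]
    linarith
  · -- Lipschitz-type: η y - η x ≤ x - y
    have habs : |y - x| = x - y := by rw [abs_sub_comm]; exact abs_of_nonneg (by linarith)
    rw [habs]
    have key : Real.negMulLog y - Real.negMulLog x ≤ x - y := by
      simp only [Real.negMulLog]
      -- x log x - y log y ≤ x - y
      have t1 : (x - y) * Real.log x ≤ 0 :=
        mul_nonpos_of_nonneg_of_nonpos (by linarith) (Real.log_nonpos hx0 hx1)
      have t2 : y * (Real.log x - Real.log y) ≤ x - y := by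
        rcases eq_or_lt_of_le hy0 with h0 | h0
        · rw [← h0]; simpa using (by linarith : (0:ℝ) ≤ x)
        · have hx0' : 0 < x := lt_of_lt_of_le h0 h
          have : Real.log x - Real.log y = Real.log (x / y) := by
            rw [Real.log_div (ne_of_gt hx0') (ne_of_gt h0)]
          rw [this]
          have := Real.log_le_sub_one_of_pos (show 0 < x / y by positivity)
          calc y * Real.log (x / y) ≤ y * (x / y - 1) := mul_le_mul_of_nonneg_left this h0.le
            _ = x - y := by field_simp
      nlinarith [t1, t2]
    have hnn : 0 ≤ Real.negMulLog (x - y) :=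
      Real.negMulLog_nonneg (by linarith) (by linarith)
    linarith



lemma frobNorm_nonneg (C : Matrix (Fin d) (Fin d) ℂ) : 0 ≤ frobNorm C := Real.sqrt_nonneg _

lemma trace_re_eq (C : Matrix (Fin d) (Fin d) ℂ) :
    (Cᴴ * C).trace.re = ∑ i, ∑ j, Complex.normSq (C j i) := by
  simp only [Matrix.trace, Matrix.diag, Matrix.mul_apply, Matrix.conjTranspose_apply]
  rw [Complex.re_sum]
  refine Finset.sum_congr rfl fun i _ => ?_
  rw [Complex.re_sum]
  refine Finset.sum_congr rfl fun j _ => ?_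
  rw [Complex.star_def, ← Complex.normSq_eq_conj_mul_self]
  simp

lemma abs_diag_re_le_frobNorm (C : Matrix (Fin d) (Fin d) ℂ) (k : Fin d) :
    |(C k k).re| ≤ frobNorm C := by
  have h1 : |(C k k).re| ≤ ‖C k k‖ := Complex.abs_re_le_norm _
  have h2 : ‖C k k‖ = Real.sqrt (Complex.normSq (C k k)) := by
    rw [Complex.norm_def]
  refine h1.trans ?_
  rw [h2, frobNorm, trace_re_eq]
  apply Real.sqrt_le_sqrt
  calc Complex.normSq (C k k) ≤ ∑ j, Complex.normSq (C j k) := by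
        exact Finset.single_le_sum (f := fun j => Complex.normSq (C j k))
          (fun j _ => Complex.normSq_nonneg _) (Finset.mem_univ k)
    _ ≤ ∑ i, ∑ j, Complex.normSq (C j i) := by
        apply Finset.single_le_sum
          (fun i _ => Finset.sum_nonneg fun j _ => Complex.normSq_nonneg _) (Finset.mem_univ k)

lemma frobNorm_unitary_conj (C U : Matrix (Fin d) (Fin d) ℂ)
    (hU : U ∈ Matrix.unitaryGroup (Fin d) ℂ) :
    frobNorm (star U * C * U) = frobNorm C := by
  have h1 : U * star U = 1 := Matrix.mem_unitaryGroup_iff.mp hU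
  have h2 : star U * U = 1 := Matrix.mem_unitaryGroup_iff'.mp hU
  unfold frobNorm
  congr 2
  have : (star U * C * U)ᴴ * (star U * C * U) = star U * (Cᴴ * C) * U := by
    have hs : (star U * C * U)ᴴ = star U * Cᴴ * U := by
      simp [Matrix.conjTranspose_mul, Matrix.mul_assoc, Matrix.star_eq_conjTranspose]
    rw [hs]
    calc star U * Cᴴ * U * (star U * C * U)
        = star U * Cᴴ * (U * star U) * C * U := by
          simp only [Matrix.mul_assoc]
      _ = star U * (Cᴴ * C) * U := by rw [h1]; simp only [Matrix.mul_one, Matrix.mul_assoc]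
  rw [this, Matrix.trace_mul_cycle, ← Matrix.mul_assoc, h1, Matrix.one_mul]

lemma frobNorm_sub_comm (A B : Matrix (Fin d) (Fin d) ℂ) :
    frobNorm (A - B) = frobNorm (B - A) := by
  have : B - A = -(A - B) := by abel
  rw [this]
  unfold frobNorm
  rw [Matrix.conjTranspose_neg, Matrix.neg_mul, Matrix.mul_neg, neg_neg]

lemma exponent_nonneg : 0 ≤ 1 - (Real.exp 1)⁻¹ := by
  have h1e : (1:ℝ) ≤ Real.exp 1 := by have := Real.add_one_le_exp 1; linarith
  have : (Real.exp 1)⁻¹ ≤ 1 := by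
    rw [inv_le_one_iff₀]; right; exact h1e
  linarith

lemma negMulLog_step {x y ε : ℝ} (hx0 : 0 ≤ x) (hx1 : x ≤ 1) (hy0 : 0 ≤ y) (hy1 : y ≤ 1)
    (hε : |y - x| ≤ ε) :
    Real.negMulLog y - Real.negMulLog x ≤ 2 * ε ^ (1 - (Real.exp 1)⁻¹) := by
  set c := 1 - (Real.exp 1)⁻¹ with hc
  have c0 : 0 ≤ c := exponent_nonneg
  have hcle : c ≤ 1 := by
    have h0 : (0:ℝ) ≤ (Real.exp 1)⁻¹ := by positivity
    rw [hc]
    linarith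
  have h1 := negMulLog_sub_le hx0 hx1 hy0 hy1
  have hδ1 : |y - x| ≤ 1 := abs_le.mpr ⟨by linarith, by linarith⟩
  have h2 : Real.negMulLog |y - x| ≤ |y - x| ^ c := negMulLog_le_rpow (abs_nonneg _)
  have h3 : |y - x| ≤ |y - x| ^ c := by
    rcases eq_or_lt_of_le (abs_nonneg (y - x)) with h | h
    · rw [← h]; exact Real.rpow_nonneg le_rfl c
    · calc |y - x| = |y - x| ^ (1:ℝ) := (Real.rpow_one _).symm
        _ ≤ |y - x| ^ c := Real.rpow_le_rpow_of_exponent_ge h hδ1 hcle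
  have h4 : |y - x| ^ c ≤ ε ^ c := Real.rpow_le_rpow (abs_nonneg _) hε c0
  linarith

lemma entropy_sub_le (A B : Matrix (Fin d) (Fin d) ℂ)
    (hA : A.PosSemidef) (hB : B.PosSemidef) (htA : A.trace = 1) (htB : B.trace = 1) :
    vnEntropy B - vnEntropy A ≤ (d : ℝ) * (2 * frobNorm (B - A) ^ (1 - (Real.exp 1)⁻¹)) := by
  classical
  have hAH := hA.1
  have hBH := hB.1
  set U : Matrix (Fin d) (Fin d) ℂ := ↑(hAH.eigenvectorUnitary) with hUdef
  set V : Matrix (Fin d) (Fin d) ℂ := ↑(hBH.eigenvectorUnitary) with hVdef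
  set p : Fin d → ℝ := hAH.eigenvalues with hpdef
  set μ : Fin d → ℝ := hBH.eigenvalues with hμdef
  have hUmem : U ∈ Matrix.unitaryGroup (Fin d) ℂ := (hAH.eigenvectorUnitary).2
  have hVmem : V ∈ Matrix.unitaryGroup (Fin d) ℂ := (hBH.eigenvectorUnitary).2
  have hU1 : U * star U = 1 := Matrix.mem_unitaryGroup_iff.mp hUmem
  have hU2 : star U * U = 1 := Matrix.mem_unitaryGroup_iff'.mp hUmem
  have hV1 : V * star V = 1 := Matrix.mem_unitaryGroup_iff.mp hVmem
  have hV2 : star V * V = 1 := Matrix.mem_unitaryGroup_iff'.mp hVmem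
  set W : Matrix (Fin d) (Fin d) ℂ := star U * V with hWdef
  have hsW : star W = star V * U := by rw [hWdef, StarMul.star_mul, star_star]
  have hW1 : W * star W = 1 := by
    rw [hsW, hWdef]
    calc star U * V * (star V * U) = star U * (V * star V) * U := by
          simp only [Matrix.mul_assoc]
      _ = 1 := by rw [hV1, Matrix.mul_one, hU2]
  have hW2 : star W * W = 1 := by
    rw [hsW, hWdef]
    calc star V * U * (star U * V) = star V * (U * star U) * V := by
          simp only [Matrix.mul_assoc]
      _ = 1 := by rw [hU1, Matrix.mul_one, hV2]
  set w : Fin d → Fin d → ℝ := fun k j => Complex.normSq (W k j) with hwdef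
  set q : Fin d → ℝ := fun k => ∑ j, w k j * μ j with hqdef
  have hw0 : ∀ k j, 0 ≤ w k j := fun k j => Complex.normSq_nonneg _
  have hμ0 : ∀ j, 0 ≤ μ j := fun j => hB.eigenvalues_nonneg j
  have hp0 : ∀ k, 0 ≤ p k := fun k => hA.eigenvalues_nonneg k
  -- row sums of w are 1
  have hrow : ∀ k, ∑ j, w k j = 1 := by
    intro k
    have h := congrFun (congrFun hW1 k) k
    rw [Matrix.mul_apply, Matrix.one_apply_eq] at h
    have h2 : ∑ j, (w k j : ℂ) = 1 := by
      rw [← h]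
      refine Finset.sum_congr rfl fun j _ => ?_
      rw [Matrix.star_apply, Complex.star_def, Complex.mul_conj]
    exact_mod_cast (by push_cast at h2 ⊢; exact h2 : ((∑ j, w k j : ℝ) : ℂ) = 1)
  have hcol : ∀ j, ∑ k, w k j = 1 := by
    intro j
    have h := congrFun (congrFun hW2 j) j
    rw [Matrix.mul_apply, Matrix.one_apply_eq] at h
    have h2 : ∑ k, (w k j : ℂ) = 1 := by
      rw [← h]
      refine Finset.sum_congr rfl fun k _ => ?_
      rw [Matrix.star_apply, Complex.star_def, mul_comm, Complex.mul_conj]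
    exact_mod_cast (by push_cast at h2 ⊢; exact h2 : ((∑ k, w k j : ℝ) : ℂ) = 1)
  -- eigenvalue sums are 1
  have trace_conj : ∀ (X Y : Matrix (Fin d) (Fin d) ℂ), Y * star Y = 1 →
      (star Y * X * Y).trace = X.trace := by
    intro X Y hY
    rw [Matrix.trace_mul_cycle, hY, Matrix.one_mul]
  have hsum_p : ∑ k, p k = 1 := by
    have h := (by have h0 := hAH.conjStarAlgAut_star_eigenvectorUnitary; rw [Unitary.conjStarAlgAut_star_apply] at h0; exact h0 : star U * A * U = diagonal ((RCLike.ofReal : ℝ → ℂ) ∘ p))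
    have h2 : (diagonal ((RCLike.ofReal : ℝ → ℂ) ∘ p)).trace = (1 : ℂ) := by
      rw [← h, trace_conj A U hU1, htA]
    rw [Matrix.trace_diagonal] at h2
    exact_mod_cast (by push_cast at h2 ⊢; exact h2 : ((∑ k, p k : ℝ) : ℂ) = 1)
  have hsum_μ : ∑ j, μ j = 1 := by
    have h := (by have h0 := hBH.conjStarAlgAut_star_eigenvectorUnitary; rw [Unitary.conjStarAlgAut_star_apply] at h0; exact h0 : star V * B * V = diagonal ((RCLike.ofReal : ℝ → ℂ) ∘ μ))
    have h2 : (diagonal ((RCLike.ofReal : ℝ → ℂ) ∘ μ)).trace = (1 : ℂ) := by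
      rw [← h, trace_conj B V hV1, htB]
    rw [Matrix.trace_diagonal] at h2
    exact_mod_cast (by push_cast at h2 ⊢; exact h2 : ((∑ j, μ j : ℝ) : ℂ) = 1)
  have hp1 : ∀ k, p k ≤ 1 := by
    intro k
    rw [← hsum_p]
    exact Finset.single_le_sum (fun j _ => hp0 j) (Finset.mem_univ k)
  have hq0 : ∀ k, 0 ≤ q k :=
    fun k => Finset.sum_nonneg fun j _ => mul_nonneg (hw0 k j) (hμ0 j)
  have hq_total : ∑ k, q k = 1 := by
    rw [hqdef]
    simp only []
    rw [Finset.sum_comm]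
    calc ∑ j, ∑ k, w k j * μ j = ∑ j, (∑ k, w k j) * μ j := by
          refine Finset.sum_congr rfl fun j _ => ?_
          rw [Finset.sum_mul]
      _ = ∑ j, μ j := by
          refine Finset.sum_congr rfl fun j _ => ?_
          rw [hcol j, one_mul]
      _ = 1 := hsum_μ
  have hq1 : ∀ k, q k ≤ 1 := by
    intro k
    rw [← hq_total]
    exact Finset.single_le_sum (fun j _ => hq0 j) (Finset.mem_univ k)
  -- entries
  have E1 : ∀ k, (star U * B * U) k k = (q k : ℂ) := by
    intro k
    have hBdecomp : star U * B * U = W * diagonal ((RCLike.ofReal : ℝ → ℂ) ∘ μ) * star W := by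
      conv_lhs => rw [hBH.spectral_theorem, Unitary.conjStarAlgAut_apply]
      rw [hsW, hWdef]
      simp only [Matrix.mul_assoc]
      rfl
    rw [hBdecomp, Matrix.mul_apply]
    have : ∀ j, (W * diagonal ((RCLike.ofReal : ℝ → ℂ) ∘ μ)) k j * (star W) j k
        = (w k j : ℂ) * (μ j : ℂ) := by
      intro j
      rw [Matrix.mul_diagonal, Matrix.star_apply, Complex.star_def]
      have : W k j * ((RCLike.ofReal : ℝ → ℂ) ∘ μ) j * (starRingEnd ℂ) (W k j)
          = (W k j * (starRingEnd ℂ) (W k j)) * (μ j : ℂ) := by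
        have hμc : ((RCLike.ofReal : ℝ → ℂ) ∘ μ) j = (μ j : ℂ) := rfl
        rw [hμc]
        ring
      rw [this, Complex.mul_conj]
    rw [Finset.sum_congr rfl fun j _ => this j]
    rw [hqdef]
    push_cast
    rfl
  have E2 : ∀ k, (star U * A * U) k k = (p k : ℂ) := by
    intro k
    rw [(by have h0 := hAH.conjStarAlgAut_star_eigenvectorUnitary; rw [Unitary.conjStarAlgAut_star_apply] at h0; exact h0 : star U * A * U = diagonal ((RCLike.ofReal : ℝ → ℂ) ∘ p)), Matrix.diagonal_apply_eq]
    rfl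
  have hdiff : ∀ k, |q k - p k| ≤ frobNorm (B - A) := by
    intro k
    have e3 : (star U * (B - A) * U) k k = ((q k : ℂ) - (p k : ℂ)) := by
      rw [Matrix.mul_sub, Matrix.sub_mul, Matrix.sub_apply, E1 k, E2 k]
    have e4 : ((star U * (B - A) * U) k k).re = q k - p k := by
      rw [e3]; push_cast; rfl
    calc |q k - p k| = |((star U * (B - A) * U) k k).re| := by rw [e4]
      _ ≤ frobNorm (star U * (B - A) * U) := abs_diag_re_le_frobNorm _ k
      _ = frobNorm (B - A) := frobNorm_unitary_conj _ _ hUmem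
  -- entropies
  have hSB : vnEntropy B = ∑ j, Real.negMulLog (μ j) := by
    rw [vnEntropy, dif_pos hBH]
  have hSA : vnEntropy A = ∑ k, Real.negMulLog (p k) := by
    rw [vnEntropy, dif_pos hAH]
  -- Jensen
  have hjensen : vnEntropy B ≤ ∑ k, Real.negMulLog (q k) := by
    rw [hSB]
    calc ∑ j, Real.negMulLog (μ j) = ∑ j, (∑ k, w k j) * Real.negMulLog (μ j) := by
          refine Finset.sum_congr rfl fun j _ => ?_
          rw [hcol j, one_mul]
      _ = ∑ j, ∑ k, w k j * Real.negMulLog (μ j) := by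
          refine Finset.sum_congr rfl fun j _ => ?_
          rw [Finset.sum_mul]
      _ = ∑ k, ∑ j, w k j * Real.negMulLog (μ j) := Finset.sum_comm
      _ ≤ ∑ k, Real.negMulLog (q k) := by
          refine Finset.sum_le_sum fun k _ => ?_
          have := Real.concaveOn_negMulLog.le_map_sum (t := Finset.univ)
            (w := fun j => w k j) (p := μ)
            (fun j _ => hw0 k j) (hrow k) (fun j _ => Set.mem_Ici.mpr (hμ0 j))
          simpa [smul_eq_mul, hqdef] using this
  -- conclude
  have hstep : ∀ k, Real.negMulLog (q k) - Real.negMulLog (p k)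
      ≤ 2 * frobNorm (B - A) ^ (1 - (Real.exp 1)⁻¹) :=
    fun k => negMulLog_step (hp0 k) (hp1 k) (hq0 k) (hq1 k) (hdiff k)
  calc vnEntropy B - vnEntropy A ≤ (∑ k, Real.negMulLog (q k)) - ∑ k, Real.negMulLog (p k) := by
        rw [hSA]; linarith [hjensen]
    _ = ∑ k, (Real.negMulLog (q k) - Real.negMulLog (p k)) := by rw [Finset.sum_sub_distrib]
    _ ≤ ∑ _k : Fin d, 2 * frobNorm (B - A) ^ (1 - (Real.exp 1)⁻¹) :=
        Finset.sum_le_sum fun k _ => hstep k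
    _ = (d : ℝ) * (2 * frobNorm (B - A) ^ (1 - (Real.exp 1)⁻¹)) := by
        rw [Finset.sum_const, Finset.card_univ, Fintype.card_fin, nsmul_eq_mul]



theorem stmt_7 (d : ℕ) (hd : 1 ≤ d)
    (ρ ρhat : ℝ → Matrix (Fin d) (Fin d) ℂ)
    (hρ : ∀ t : ℝ, 0 ≤ t → (ρ t).PosSemidef ∧ (ρ t).trace = 1)
    (hρhat : ∀ t : ℝ, 0 ≤ t → (ρhat t).PosSemidef ∧ (ρhat t).trace = 1)
    (M σ : ℝ) (hM : 0 < M) (hσ : 0 < σ)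
    (hconv : ∀ t : ℝ, 0 ≤ t → frobNorm (ρhat t - ρ t) ≤ M * Real.exp (-(σ * t))) :
    ∃ T : ℝ, 0 < T ∧ ∃ K : ℝ, 0 < K ∧ ∀ t : ℝ, T ≤ t →
      |vnEntropy (ρ t) - vnEntropy (ρhat t)| ≤
        K * Real.exp (-(σ * (1 - 1 / Real.exp 1) * t)) := by
  set c : ℝ := 1 - (Real.exp 1)⁻¹ with hc
  have c0 : 0 ≤ c := exponent_nonneg
  have hd1 : (1:ℝ) ≤ (d:ℝ) := by exact_mod_cast hd
  have hMc : 0 < M ^ c := Real.rpow_pos_of_pos hM c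
  refine ⟨1, one_pos, (d:ℝ) * (2 * M ^ c), by positivity, fun t ht => ?_⟩
  have ht0 : (0:ℝ) ≤ t := le_trans zero_le_one ht
  obtain ⟨hP, hT⟩ := hρ t ht0
  obtain ⟨hP', hT'⟩ := hρhat t ht0
  set F : ℝ := frobNorm (ρhat t - ρ t) with hF
  have hFb : F ≤ M * Real.exp (-(σ * t)) := hconv t ht0
  have hFc : F ^ c ≤ M ^ c * Real.exp (-(σ * (1 - 1 / Real.exp 1) * t)) := by
    calc F ^ c ≤ (M * Real.exp (-(σ * t))) ^ c :=
          Real.rpow_le_rpow (frobNorm_nonneg _) hFb c0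
      _ = M ^ c * Real.exp (-(σ * t)) ^ c :=
          Real.mul_rpow hM.le (Real.exp_nonneg _)
      _ = M ^ c * Real.exp (-(σ * (1 - 1 / Real.exp 1) * t)) := by
          rw [← Real.exp_mul]
          congr 1
          rw [hc, one_div]
          ring
  have h1 : vnEntropy (ρ t) - vnEntropy (ρhat t) ≤ (d:ℝ) * (2 * F ^ c) := by
    have := entropy_sub_le (ρhat t) (ρ t) hP' hP hT' hT
    rw [← hc] at this
    calc vnEntropy (ρ t) - vnEntropy (ρhat t)
        ≤ (d:ℝ) * (2 * frobNorm (ρ t - ρhat t) ^ c) := this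
      _ = (d:ℝ) * (2 * F ^ c) := by rw [frobNorm_sub_comm]
  have h2 : vnEntropy (ρhat t) - vnEntropy (ρ t) ≤ (d:ℝ) * (2 * F ^ c) := by
    have := entropy_sub_le (ρ t) (ρhat t) hP hP' hT hT'
    rw [← hc] at this
    exact this
  have h3 : (d:ℝ) * (2 * F ^ c)
      ≤ (d:ℝ) * (2 * M ^ c) * Real.exp (-(σ * (1 - 1 / Real.exp 1) * t)) := by
    have := mul_le_mul_of_nonneg_left hFc (by positivity : (0:ℝ) ≤ 2 * (d:ℝ))
    nlinarith
  rw [abs_sub_le_iff]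
  exact ⟨h1.trans h3, h2.trans h3⟩

end helpers
end

section
/- (Theorem 2, part (ii): essentially exponential convergence of S(ρ‖ρ̂).) Let d ≥ 1, and let ρ : [0,∞) → M_d(ℂ) and ρ̂ : [0,∞) → M_d(ℂ) be functions such that ρ(t) and ρ̂(t) are positive definite d×d density matrices for every t ≥ 0. Suppose there exist constants M > 0 and σ > 0 with ‖ρ̂(t) - ρ(t)‖ ≤ M·e^{-σt} in the Frobenius norm for all t ≥ 0, and a constant D > 0 with ‖ln ρ̂(t)‖ ≤ D for all t ≥ 0. Then there exist a finite time T > 0 and a constant K > 0 such that |S(ρ(t)‖ρ̂(t))| ≤ K·e^{-σ(1 - 1/e)t} for all t ≥ T. -/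
open Matrix
open scoped ComplexOrder

/-- The matrix logarithm obtained via the continuous functional calculus. -/
noncomputable def matLog {d : ℕ} (ρ : Matrix (Fin d) (Fin d) ℂ) : Matrix (Fin d) (Fin d) ℂ :=
  cfc Real.log ρ

/-- The quantum relative entropy `S(σ‖ρ) = Re tr (σ ln σ - σ ln ρ)`. -/
noncomputable def relEntropy {d : ℕ} (σ ρ : Matrix (Fin d) (Fin d) ℂ) : ℝ :=
  ((σ * matLog σ - σ * matLog ρ).trace).re

lemma diag_trace {d : ℕ} (a b : Fin d → ℂ) (W : Matrix (Fin d) (Fin d) ℂ) :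
    (diagonal a * W * diagonal b * star W).trace =
      ∑ j, ∑ k, a j * b k * (W j k * star (W j k)) := by
  simp only [Matrix.trace, Matrix.diag, Matrix.mul_apply, star_eq_conjTranspose,
    conjTranspose_apply, Matrix.diagonal_apply, ite_mul, mul_ite, zero_mul, mul_zero,
    Finset.sum_ite_eq, Finset.sum_ite_eq', Finset.mem_univ, if_true]
  refine Finset.sum_congr rfl fun j _ => Finset.sum_congr rfl fun k _ => ?_
  ring

lemma trace_cfc_mul_cfc {d : ℕ} {A B : Matrix (Fin d) (Fin d) ℂ}
    (hA : A.IsHermitian) (hB : B.IsHermitian) (f g : ℝ → ℝ)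
    (W : Matrix (Fin d) (Fin d) ℂ)
    (hW : W = star (hA.eigenvectorUnitary : Matrix (Fin d) (Fin d) ℂ) *
      (hB.eigenvectorUnitary : Matrix (Fin d) (Fin d) ℂ)) :
    ((hA.cfc f) * (hB.cfc g)).trace =
      ((∑ j, ∑ k, ‖W j k‖ ^ 2 * f (hA.eigenvalues j) * g (hB.eigenvalues k) : ℝ) : ℂ) := by
  set U := (hA.eigenvectorUnitary : Matrix (Fin d) (Fin d) ℂ) with hU
  set V := (hB.eigenvectorUnitary : Matrix (Fin d) (Fin d) ℂ) with hV
  set Da := diagonal ((RCLike.ofReal : ℝ → ℂ) ∘ f ∘ hA.eigenvalues) with hDa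
  set Db := diagonal ((RCLike.ofReal : ℝ → ℂ) ∘ g ∘ hB.eigenvalues) with hDb
  have h1 : (hA.cfc f) * (hB.cfc g) = U * (Da * star U * (V * Db * star V)) := by
    simp only [Matrix.IsHermitian.cfc, Unitary.conjStarAlgAut_apply, mul_assoc, ← hU, ← hV, ← hDa, ← hDb]
  rw [h1, Matrix.trace_mul_comm]
  have h2 : Da * star U * (V * Db * star V) * U = Da * W * Db * star W := by
    rw [hW]; simp only [Matrix.star_mul, star_star, mul_assoc]
  rw [h2, diag_trace]
  push_cast
  refine Finset.sum_congr rfl fun j _ => Finset.sum_congr rfl fun k _ => ?_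
  have hco : (RCLike.ofReal : ℝ → ℂ) = Complex.ofReal := rfl
  simp only [Function.comp_apply, RCLike.star_def, Complex.mul_conj, hco]
  rw [Complex.normSq_eq_norm_sq]
  push_cast
  ring

lemma trace_cfc_mul_cfc_self {d : ℕ} {A : Matrix (Fin d) (Fin d) ℂ}
    (hA : A.IsHermitian) (f g : ℝ → ℝ) :
    ((hA.cfc f) * (hA.cfc g)).trace =
      ((∑ j, f (hA.eigenvalues j) * g (hA.eigenvalues j) : ℝ) : ℂ) := by
  have hW : (1 : Matrix (Fin d) (Fin d) ℂ) =
      star (hA.eigenvectorUnitary : Matrix (Fin d) (Fin d) ℂ) *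
      (hA.eigenvectorUnitary : Matrix (Fin d) (Fin d) ℂ) :=
    (Matrix.mem_unitaryGroup_iff'.mp (hA.eigenvectorUnitary).2).symm
  rw [trace_cfc_mul_cfc hA hA f g 1 hW]
  norm_cast
  refine Finset.sum_congr rfl fun j _ => ?_
  rw [Finset.sum_eq_single j]
  · simp [Matrix.one_apply_eq]
  · intro k _ hk
    simp [Matrix.one_apply_ne' hk]
  · simp

/-- The key quantitative bound: for positive definite density matrices `A`, `B` with
`‖log B‖_F ≤ D`, the relative entropy is between `0` and `e^D √d ‖B - A‖_F`. -/
lemma key_bound {d : ℕ} {A B : Matrix (Fin d) (Fin d) ℂ}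
    (hA : A.PosDef) (hB : B.PosDef) (htA : A.trace = 1) (htB : B.trace = 1)
    {D : ℝ} (hD : 0 ≤ D) (hlogB : frobNorm (matLog B) ≤ D) :
    |relEntropy A B| ≤ Real.exp D * (Real.sqrt d * frobNorm (B - A)) := by
  have hA' : A.IsHermitian := hA.1
  have hB' : B.IsHermitian := hB.1
  set U := (hA'.eigenvectorUnitary : Matrix (Fin d) (Fin d) ℂ) with hU
  set V := (hB'.eigenvectorUnitary : Matrix (Fin d) (Fin d) ℂ) with hV
  set W := star U * V with hW
  set lam := hA'.eigenvalues with hlamdef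
  set mu := hB'.eigenvalues with hmudef
  set P : Fin d → Fin d → ℝ := fun j k => ‖W j k‖ ^ 2 with hP
  have hPnn : ∀ j k, 0 ≤ P j k := fun j k => by positivity
  have hlampos : ∀ j, 0 < lam j := fun j => hA.eigenvalues_pos j
  have hmupos : ∀ k, 0 < mu k := fun k => hB.eigenvalues_pos k
  -- unitarity facts
  have hUU' : U * star U = 1 := Matrix.mem_unitaryGroup_iff.mp (hA'.eigenvectorUnitary).2
  have hUU : star U * U = 1 := Matrix.mem_unitaryGroup_iff'.mp (hA'.eigenvectorUnitary).2
  have hVV' : V * star V = 1 := Matrix.mem_unitaryGroup_iff.mp (hB'.eigenvectorUnitary).2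
  have hVV : star V * V = 1 := Matrix.mem_unitaryGroup_iff'.mp (hB'.eigenvectorUnitary).2
  have hWW : W * star W = 1 := by
    rw [hW, Matrix.star_mul, star_star]
    calc star U * V * (star V * U) = star U * (V * star V) * U := by
          simp only [mul_assoc]
      _ = star U * U := by rw [hVV', mul_one]
      _ = 1 := hUU
  have hWW' : star W * W = 1 := by
    rw [hW, Matrix.star_mul, star_star]
    calc star V * U * (star U * V) = star V * (U * star U) * V := by
          simp only [mul_assoc]
      _ = star V * V := by rw [hUU', mul_one]
      _ = 1 := hVV
  -- row and column sums of P
  have hentry : ∀ (X : Matrix (Fin d) (Fin d) ℂ) (j k : Fin d),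
      X j k * star (X j k) = ((‖X j k‖ ^ 2 : ℝ) : ℂ) := by
    intro X j k
    rw [RCLike.star_def, Complex.mul_conj, Complex.normSq_eq_norm_sq]
  have hrow : ∀ j, ∑ k, P j k = 1 := by
    intro j
    have h1 : (W * star W) j j = 1 := by rw [hWW]; simp [Matrix.one_apply]
    have h2 : (W * star W) j j = ((∑ k, P j k : ℝ) : ℂ) := by
      rw [Matrix.mul_apply]
      push_cast
      refine Finset.sum_congr rfl fun k _ => ?_
      exact hentry W j k
    rw [h2] at h1
    exact_mod_cast h1
  have hcol : ∀ k, ∑ j, P j k = 1 := by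
    intro k
    have h1 : (star W * W) k k = 1 := by rw [hWW']; simp [Matrix.one_apply]
    have h2 : (star W * W) k k = ((∑ j, P j k : ℝ) : ℂ) := by
      rw [Matrix.mul_apply]
      push_cast
      refine Finset.sum_congr rfl fun j _ => ?_
      rw [show (star W) k j = star (W j k) from rfl, mul_comm]
      exact hentry W j k
    rw [h2] at h1
    exact_mod_cast h1
  -- sums of eigenvalues
  have htrace_eig : ∀ (C : Matrix (Fin d) (Fin d) ℂ) (hC : C.IsHermitian),
      C.trace = ((∑ j, hC.eigenvalues j : ℝ) : ℂ) := by
    intro C hC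
    conv_lhs => rw [hC.spectral_theorem]
    rw [Unitary.conjStarAlgAut_apply, Matrix.trace_mul_cycle,
      Matrix.mem_unitaryGroup_iff'.mp (hC.eigenvectorUnitary).2, one_mul, trace_diagonal]
    push_cast
    rfl
  have hsumlam : ∑ j, lam j = 1 := by
    have := htrace_eig A hA'
    rw [htA] at this
    exact_mod_cast this.symm
  have hsummu : ∑ k, mu k = 1 := by
    have := htrace_eig B hB'
    rw [htB] at this
    exact_mod_cast this.symm
  have hlam1 : ∀ j, lam j ≤ 1 := by
    intro j
    rw [← hsumlam]
    exact Finset.single_le_sum (fun i _ => (hlampos i).le) (Finset.mem_univ j)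
  -- cfc identifications
  have hAcfc : A = hA'.cfc (fun x : ℝ => x) := by
    rw [← hA'.cfc_eq]
    exact (cfc_id' ℝ A hA').symm
  have hBcfc : B = hB'.cfc (fun x : ℝ => x) := by
    rw [← hB'.cfc_eq]
    exact (cfc_id' ℝ B hB').symm
  have hlogBcfc : matLog B = hB'.cfc Real.log := by
    rw [matLog, hB'.cfc_eq]
  have hlogAcfc : matLog A = hA'.cfc Real.log := by
    rw [matLog, hA'.cfc_eq]
  -- trace computations
  have hAA : (A * matLog A).trace.re = ∑ j, lam j * Real.log (lam j) := by
    have h := trace_cfc_mul_cfc_self hA' (fun x => x) Real.log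
    rw [← hAcfc, ← hlogAcfc] at h
    rw [h, Complex.ofReal_re]
  have hAB : (A * matLog B).trace.re = ∑ j, ∑ k, P j k * lam j * Real.log (mu k) := by
    have h := trace_cfc_mul_cfc hA' hB' (fun x => x) Real.log W hW
    rw [← hAcfc, ← hlogBcfc] at h
    rw [h, Complex.ofReal_re]
  have hABid : (A * B).trace.re = ∑ j, ∑ k, P j k * lam j * mu k := by
    have h := trace_cfc_mul_cfc hA' hB' (fun x => x) (fun x => x) W hW
    rw [← hAcfc, ← hBcfc] at h
    rw [h, Complex.ofReal_re]
  have hA2 : (A * A).trace.re = ∑ j, lam j * lam j := by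
    have h := trace_cfc_mul_cfc_self hA' (fun x => x) (fun x => x)
    rw [← hAcfc] at h
    rw [h, Complex.ofReal_re]
  have hB2 : (B * B).trace.re = ∑ k, mu k * mu k := by
    have h := trace_cfc_mul_cfc_self hB' (fun x => x) (fun x => x)
    rw [← hBcfc] at h
    rw [h, Complex.ofReal_re]
  have hL2 : (matLog B * matLog B).trace.re = ∑ k, Real.log (mu k) * Real.log (mu k) := by
    have h := trace_cfc_mul_cfc_self hB' Real.log Real.log
    rw [← hlogBcfc] at h
    rw [h, Complex.ofReal_re]
  -- bound on log eigenvalues of B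
  have hlogBherm : (matLog B).IsHermitian := by
    rw [hlogBcfc]
    have : IsSelfAdjoint (hB'.cfc Real.log) := by
      rw [← hB'.cfc_eq]
      exact cfc_predicate Real.log B
    exact this
  have hmuD : ∀ k, |Real.log (mu k)| ≤ D := by
    intro k
    have hfn : frobNorm (matLog B) = Real.sqrt (∑ k, Real.log (mu k) * Real.log (mu k)) := by
      rw [frobNorm, hlogBherm.eq, hL2]
    have hsum_nonneg : (0:ℝ) ≤ ∑ k, Real.log (mu k) * Real.log (mu k) :=
      Finset.sum_nonneg fun i _ => mul_self_nonneg _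
    have hsle : ∑ k, Real.log (mu k) * Real.log (mu k) ≤ D ^ 2 := by
      have := hlogB
      rw [hfn] at this
      calc ∑ k, Real.log (mu k) * Real.log (mu k)
          = Real.sqrt (∑ k, Real.log (mu k) * Real.log (mu k)) ^ 2 := by
            rw [Real.sq_sqrt hsum_nonneg]
        _ ≤ D ^ 2 := by
            apply pow_le_pow_left₀ (Real.sqrt_nonneg _) this
    have hterm : Real.log (mu k) * Real.log (mu k) ≤ D ^ 2 := by
      calc Real.log (mu k) * Real.log (mu k)
          ≤ ∑ i, Real.log (mu i) * Real.log (mu i) :=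
            Finset.single_le_sum (f := fun i => Real.log (mu i) * Real.log (mu i))
              (fun i _ => mul_self_nonneg _) (Finset.mem_univ k)
        _ ≤ D ^ 2 := hsle
    have h2 : |Real.log (mu k)| ^ 2 ≤ D ^ 2 := by
      rw [sq_abs]; nlinarith [hterm]
    nlinarith [abs_nonneg (Real.log (mu k))]
  have hmulb : ∀ k, Real.exp (-D) ≤ mu k := by
    intro k
    have h1 : -D ≤ Real.log (mu k) := by
      have h2 := hmuD k
      have h3 := neg_abs_le (Real.log (mu k))
      linarith
    calc Real.exp (-D) ≤ Real.exp (Real.log (mu k)) := Real.exp_le_exp.mpr h1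
      _ = mu k := Real.exp_log (hmupos k)
  -- relative entropy as a double sum
  have hS : relEntropy A B
      = ∑ j, ∑ k, P j k * (lam j * (Real.log (lam j) - Real.log (mu k))) := by
    rw [relEntropy, Matrix.trace_sub, Complex.sub_re, hAA, hAB]
    have h1 : ∑ j, lam j * Real.log (lam j)
        = ∑ j, ∑ k, P j k * lam j * Real.log (lam j) := by
      refine Finset.sum_congr rfl fun j _ => ?_
      have h2 : ∑ k, P j k * lam j * Real.log (lam j)
          = (∑ k, P j k) * (lam j * Real.log (lam j)) := by
        rw [Finset.sum_mul]
        exact Finset.sum_congr rfl fun k _ => by ring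
      rw [h2, hrow, one_mul]
    rw [h1, ← Finset.sum_sub_distrib]
    refine Finset.sum_congr rfl fun j _ => ?_
    rw [← Finset.sum_sub_distrib]
    exact Finset.sum_congr rfl fun k _ => by ring
  -- the double sum of P (lam - mu) vanishes
  have hzero : ∑ j, ∑ k, P j k * (lam j - mu k) = 0 := by
    have e2 : ∑ j, ∑ k, P j k * lam j = 1 := by
      have : ∀ j, ∑ k, P j k * lam j = lam j := by
        intro j; rw [← Finset.sum_mul, hrow, one_mul]
      simp_rw [this]; exact hsumlam
    have e3 : ∑ j, ∑ k, P j k * mu k = 1 := by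
      rw [Finset.sum_comm]
      have : ∀ k, ∑ j, P j k * mu k = mu k := by
        intro k; rw [← Finset.sum_mul, hcol, one_mul]
      simp_rw [this]; exact hsummu
    have e1 : ∑ j, ∑ k, P j k * (lam j - mu k)
        = (∑ j, ∑ k, P j k * lam j) - (∑ j, ∑ k, P j k * mu k) := by
      rw [← Finset.sum_sub_distrib]
      refine Finset.sum_congr rfl fun j _ => ?_
      rw [← Finset.sum_sub_distrib]
      exact Finset.sum_congr rfl fun k _ => by ring
    rw [e1, e2, e3]; norm_num
  -- lower bound : 0 ≤ relEntropy
  have hlower : 0 ≤ relEntropy A B := by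
    rw [hS]
    have hstep : ∑ j, ∑ k, P j k * (lam j - mu k)
        ≤ ∑ j, ∑ k, P j k * (lam j * (Real.log (lam j) - Real.log (mu k))) := by
      refine Finset.sum_le_sum fun j _ => Finset.sum_le_sum fun k _ => ?_
      refine mul_le_mul_of_nonneg_left ?_ (hPnn j k)
      have hlog := Real.log_le_sub_one_of_pos (div_pos (hmupos k) (hlampos j))
      rw [Real.log_div (hmupos k).ne' (hlampos j).ne'] at hlog
      have h3 := mul_le_mul_of_nonneg_left hlog (hlampos j).le
      have h4 : lam j * (mu k / lam j - 1) = mu k - lam j := by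
        have hne := (hlampos j).ne'
        field_simp
      nlinarith [h3, h4]
    linarith [hzero ▸ hstep]
  -- upper bound
  have hupper : relEntropy A B
      ≤ Real.exp D * ∑ j, ∑ k, P j k * |lam j - mu k| := by
    rw [hS]
    have step : ∀ j k, P j k * (lam j * (Real.log (lam j) - Real.log (mu k)))
        ≤ Real.exp D * (P j k * |lam j - mu k|) := by
      intro j k
      have hmain : lam j * (Real.log (lam j) - Real.log (mu k))
          ≤ Real.exp D * |lam j - mu k| := by
        have hlog := Real.log_le_sub_one_of_pos (div_pos (hlampos j) (hmupos k))
        rw [Real.log_div (hlampos j).ne' (hmupos k).ne'] at hlog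
        have h3 : lam j * (Real.log (lam j) - Real.log (mu k))
            ≤ lam j * (lam j / mu k - 1) :=
          mul_le_mul_of_nonneg_left hlog (hlampos j).le
        rcases le_total (mu k) (lam j) with hc | hc
        · have habs : |lam j - mu k| = lam j - mu k := abs_of_nonneg (by linarith)
          have hinv : lam j / mu k ≤ Real.exp D := by
            rw [div_le_iff₀ (hmupos k)]
            calc lam j ≤ 1 := hlam1 j
              _ = Real.exp D * Real.exp (-D) := by rw [← Real.exp_add]; norm_num
              _ ≤ Real.exp D * mu k :=
                mul_le_mul_of_nonneg_left (hmulb k) (Real.exp_nonneg D)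
          have hratio : lam j * (lam j / mu k - 1) = lam j / mu k * (lam j - mu k) := by
            have hne := (hmupos k).ne'
            field_simp
          have h5 : lam j * (lam j / mu k - 1) ≤ Real.exp D * (lam j - mu k) := by
            rw [hratio]
            exact mul_le_mul_of_nonneg_right hinv (by linarith)
          rw [habs]; linarith
        · have h5 : lam j * (lam j / mu k - 1) ≤ 0 := by
            apply mul_nonpos_of_nonneg_of_nonpos (hlampos j).le
            have h6 : lam j / mu k ≤ 1 := (div_le_one (hmupos k)).mpr hc
            linarith
          have h7 : 0 ≤ Real.exp D * |lam j - mu k| := by positivity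
          linarith
      calc P j k * (lam j * (Real.log (lam j) - Real.log (mu k)))
          ≤ P j k * (Real.exp D * |lam j - mu k|) :=
            mul_le_mul_of_nonneg_left hmain (hPnn j k)
        _ = Real.exp D * (P j k * |lam j - mu k|) := by ring
    calc ∑ j, ∑ k, P j k * (lam j * (Real.log (lam j) - Real.log (mu k)))
        ≤ ∑ j, ∑ k, Real.exp D * (P j k * |lam j - mu k|) :=
          Finset.sum_le_sum fun j _ => Finset.sum_le_sum fun k _ => step j k
      _ = Real.exp D * ∑ j, ∑ k, P j k * |lam j - mu k| := by
          rw [Finset.mul_sum]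
          exact Finset.sum_congr rfl fun j _ => (Finset.mul_sum _ _ _).symm
  -- Frobenius norm of the difference as a double sum
  have hPlam2 : ∑ j, ∑ k, P j k * (lam j * lam j) = ∑ j, lam j * lam j := by
    refine Finset.sum_congr rfl fun j _ => ?_
    rw [← Finset.sum_mul, hrow, one_mul]
  have hPmu2 : ∑ j, ∑ k, P j k * (mu k * mu k) = ∑ k, mu k * mu k := by
    rw [Finset.sum_comm]
    refine Finset.sum_congr rfl fun k _ => ?_
    rw [← Finset.sum_mul, hcol, one_mul]
  have hfrobsq : ((B - A)ᴴ * (B - A)).trace.re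
      = ∑ j, ∑ k, P j k * (lam j - mu k) ^ 2 := by
    have hBA : (B - A)ᴴ = B - A := hB'.sub hA'
    rw [hBA]
    have hexp : (B - A) * (B - A) = B * B - A * B - B * A + A * A := by
      noncomm_ring
    rw [hexp]
    simp only [Matrix.trace_add, Matrix.trace_sub, Complex.add_re, Complex.sub_re]
    have hBAtr : (B * A).trace.re = (A * B).trace.re := by rw [Matrix.trace_mul_comm]
    rw [hBAtr, hA2, hB2, hABid]
    have e1 : ∑ j, ∑ k, P j k * (lam j - mu k) ^ 2
        = (∑ j, ∑ k, P j k * (lam j * lam j)) + (∑ j, ∑ k, P j k * (mu k * mu k))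
          - 2 * (∑ j, ∑ k, P j k * lam j * mu k) := by
      rw [Finset.mul_sum, ← Finset.sum_add_distrib, ← Finset.sum_sub_distrib]
      refine Finset.sum_congr rfl fun j _ => ?_
      rw [Finset.mul_sum, ← Finset.sum_add_distrib, ← Finset.sum_sub_distrib]
      exact Finset.sum_congr rfl fun k _ => by ring
    rw [e1, hPlam2, hPmu2]
    ring
  have hfrob_eq : frobNorm (B - A) = Real.sqrt (∑ j, ∑ k, P j k * (lam j - mu k) ^ 2) := by
    rw [frobNorm, hfrobsq]
  -- Cauchy–Schwarz
  have hCS : ∑ j, ∑ k, P j k * |lam j - mu k| ≤ Real.sqrt d * frobNorm (B - A) := by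
    set Q := ∑ j, ∑ k, P j k * (lam j - mu k) ^ 2 with hQdef
    have hsumP : ∑ j, ∑ k, P j k = (d : ℝ) := by
      simp [hrow]
    have hcs := Finset.sum_mul_sq_le_sq_mul_sq Finset.univ
      (fun p : Fin d × Fin d => Real.sqrt (P p.1 p.2))
      (fun p : Fin d × Fin d => Real.sqrt (P p.1 p.2) * |lam p.1 - mu p.2|)
    have hL : ∑ p : Fin d × Fin d,
        Real.sqrt (P p.1 p.2) * (Real.sqrt (P p.1 p.2) * |lam p.1 - mu p.2|)
        = ∑ j, ∑ k, P j k * |lam j - mu k| := by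
      rw [Fintype.sum_prod_type]
      refine Finset.sum_congr rfl fun j _ => Finset.sum_congr rfl fun k _ => ?_
      rw [← mul_assoc, Real.mul_self_sqrt (hPnn j k)]
    have hf2 : ∑ p : Fin d × Fin d, Real.sqrt (P p.1 p.2) ^ 2 = (d : ℝ) := by
      rw [Fintype.sum_prod_type]
      rw [show ∑ j, ∑ k, Real.sqrt (P j k) ^ 2 = ∑ j, ∑ k, P j k from
        Finset.sum_congr rfl fun j _ => Finset.sum_congr rfl fun k _ =>
          Real.sq_sqrt (hPnn j k)]
      exact hsumP
    have hg2 : ∑ p : Fin d × Fin d,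
        (Real.sqrt (P p.1 p.2) * |lam p.1 - mu p.2|) ^ 2 = Q := by
      rw [Fintype.sum_prod_type]
      refine Finset.sum_congr rfl fun j _ => Finset.sum_congr rfl fun k _ => ?_
      rw [mul_pow, Real.sq_sqrt (hPnn j k), sq_abs]
    rw [hL, hf2, hg2] at hcs
    have hnn : 0 ≤ ∑ j, ∑ k, P j k * |lam j - mu k| :=
      Finset.sum_nonneg fun j _ => Finset.sum_nonneg fun k _ =>
        mul_nonneg (hPnn j k) (abs_nonneg _)
    have h8 : ∑ j, ∑ k, P j k * |lam j - mu k| ≤ Real.sqrt ((d : ℝ) * Q) := by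
      rw [← Real.sqrt_sq hnn]
      exact Real.sqrt_le_sqrt hcs
    rw [Real.sqrt_mul (Nat.cast_nonneg d)] at h8
    rw [hfrob_eq]
    exact h8
  rw [abs_of_nonneg hlower]
  calc relEntropy A B ≤ Real.exp D * ∑ j, ∑ k, P j k * |lam j - mu k| := hupper
    _ ≤ Real.exp D * (Real.sqrt d * frobNorm (B - A)) :=
        mul_le_mul_of_nonneg_left hCS (Real.exp_nonneg D)

theorem stmt_10 (d : ℕ) (hd : 1 ≤ d)
    (ρ ρhat : ℝ → Matrix (Fin d) (Fin d) ℂ)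
    (hρ : ∀ t : ℝ, 0 ≤ t → (ρ t).PosDef ∧ (ρ t).trace = 1)
    (hρhat : ∀ t : ℝ, 0 ≤ t → (ρhat t).PosDef ∧ (ρhat t).trace = 1)
    (M σ : ℝ) (hM : 0 < M) (hσ : 0 < σ)
    (hconv : ∀ t : ℝ, 0 ≤ t → frobNorm (ρhat t - ρ t) ≤ M * Real.exp (-(σ * t)))
    (D : ℝ) (hD : 0 < D) (hlog : ∀ t : ℝ, 0 ≤ t → frobNorm (matLog (ρhat t)) ≤ D) :
    ∃ T : ℝ, 0 < T ∧ ∃ K : ℝ, 0 < K ∧ ∀ t : ℝ, T ≤ t →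
      |relEntropy (ρ t) (ρhat t)| ≤ K * Real.exp (-(σ * (1 - 1 / Real.exp 1) * t)) := by
  have hdpos : (0:ℝ) < Real.sqrt d := Real.sqrt_pos.mpr (by exact_mod_cast hd)
  refine ⟨1, one_pos, Real.exp D * (Real.sqrt d * M), by positivity, ?_⟩
  intro t ht
  have ht0 : (0:ℝ) ≤ t := by linarith
  obtain ⟨hApd, hAtr⟩ := hρ t ht0
  obtain ⟨hBpd, hBtr⟩ := hρhat t ht0
  have hb := key_bound hApd hBpd hAtr hBtr hD.le (hlog t ht0)
  have h2 : frobNorm (ρhat t - ρ t) ≤ M * Real.exp (-(σ * t)) := hconv t ht0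
  have h3 : |relEntropy (ρ t) (ρhat t)|
      ≤ Real.exp D * (Real.sqrt d * (M * Real.exp (-(σ * t)))) := by
    refine hb.trans ?_
    have := mul_le_mul_of_nonneg_left h2 hdpos.le
    exact mul_le_mul_of_nonneg_left this (Real.exp_nonneg D)
  refine h3.trans ?_
  have hexp : Real.exp (-(σ * t)) ≤ Real.exp (-(σ * (1 - 1 / Real.exp 1) * t)) := by
    apply Real.exp_le_exp.mpr
    have hinv : 0 < 1 / Real.exp 1 := by positivity
    nlinarith [mul_nonneg hσ.le ht0, mul_nonneg (mul_nonneg hσ.le hinv.le) ht0]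
  calc Real.exp D * (Real.sqrt d * (M * Real.exp (-(σ * t))))
      ≤ Real.exp D * (Real.sqrt d * (M * Real.exp (-(σ * (1 - 1 / Real.exp 1) * t)))) := by
        have := mul_le_mul_of_nonneg_left hexp hM.le
        have := mul_le_mul_of_nonneg_left this hdpos.le
        exact mul_le_mul_of_nonneg_left this (Real.exp_nonneg D)
    _ = Real.exp D * (Real.sqrt d * M) * Real.exp (-(σ * (1 - 1 / Real.exp 1) * t)) := by
        ring
end
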